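/- Let Φ(x,y) = (L_{n-1}^ν(x) L_n^ν(y) - L_{n-1}^ν(y) L_n^ν(x))/(x-y). Then (x ∂/∂x + y ∂/∂y + 1) Φ(x,y) = (1/2)[L_{n-1}^ν(x) L_n^ν(y) + L_{n-1}^ν(y) L_n^ν(x)] for all x ≠ y in (0,∞). -/

import Mathlib

/-- The generalized Laguerre polynomial `ℓ_n^ν(x) = ∑_{k≤n} (-1)^k Γ(n+ν+1)
/ (Γ(k+ν+1)(n-k)!k!) x^k`. -/
noncomputable def laguerrePoly (n : ℕ) (ν : ℝ) (x : ℝ) : ℝ :=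
  ∑ k ∈ Finset.range (n + 1),
    (-1) ^ k * Real.Gamma ((n : ℝ) + ν + 1) /
      (Real.Gamma ((k : ℝ) + ν + 1) * (Nat.factorial (n - k)) * (Nat.factorial k)) * x ^ k

/-- The orthonormal Laguerre function
`L_n^ν(x) = (Γ(n+1)/Γ(n+ν+1))^{1/2} ℓ_n^ν(x) x^{ν/2} e^{-x/2}`. -/
noncomputable def laguerreFun (n : ℕ) (ν : ℝ) (x : ℝ) : ℝ :=
  Real.sqrt (Real.Gamma ((n : ℝ) + 1) / Real.Gamma ((n : ℝ) + ν + 1)) *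
    laguerrePoly n ν x * x ^ (ν / 2) * Real.exp (-x / 2)


noncomputable def lc (n : ℕ) (ν : ℝ) (k : ℕ) : ℝ :=
  (-1) ^ k * Real.Gamma ((n : ℝ) + ν + 1) /
      (Real.Gamma ((k : ℝ) + ν + 1) * (Nat.factorial (n - k)) * (Nat.factorial k))

lemma gamma_pos (ν : ℝ) (hν : -1 < ν) (k : ℕ) : 0 < Real.Gamma ((k : ℝ) + ν + 1) := by
  apply Real.Gamma_pos_of_pos
  have := Nat.cast_nonneg (α := ℝ) k
  linarith

lemma hG (ν : ℝ) (hν : -1 < ν) (m : ℕ) :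
    Real.Gamma (((m + 1 : ℕ) : ℝ) + ν + 1) = ((m : ℝ) + 1 + ν) * Real.Gamma ((m : ℝ) + ν + 1) := by
  push_cast
  have hpos : (0:ℝ) < (m : ℝ) + ν + 1 := by
    have := Nat.cast_nonneg (α := ℝ) m; linarith
  rw [show (m : ℝ) + 1 + ν + 1 = ((m : ℝ) + ν + 1) + 1 by ring, Real.Gamma_add_one hpos.ne']
  ring

lemma coeffA (ν : ℝ) (hν : -1 < ν) (m k : ℕ) (hk : k ≤ m) :
    (((m : ℝ) + 1) - k) * lc (m + 1) ν k = (((m : ℝ) + 1) + ν) * lc m ν k := by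
  have hΓk : Real.Gamma ((k : ℝ) + ν + 1) ≠ 0 := (gamma_pos ν hν k).ne'
  have e1 : m + 1 - k = (m - k) + 1 := by omega
  unfold lc
  rw [hG ν hν m, e1, Nat.factorial_succ]
  have e2 : ((m - k : ℕ) : ℝ) = (m : ℝ) - k := by rw [Nat.cast_sub hk]
  have hk' : (k : ℝ) ≤ (m : ℝ) := Nat.cast_le.mpr hk
  push_cast [e2]
  have f1 : ((Nat.factorial (m - k) : ℝ)) ≠ 0 := Nat.cast_ne_zero.mpr (Nat.factorial_ne_zero _)
  have f2 : ((Nat.factorial k : ℝ)) ≠ 0 := Nat.cast_ne_zero.mpr (Nat.factorial_ne_zero _)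
  have f3 : (m : ℝ) - k + 1 ≠ 0 := by linarith
  field_simp
  ring

lemma coeffC (ν : ℝ) (hν : -1 < ν) (m j : ℕ) (hj : j < m) :
    ((j : ℝ) + 1) * lc (m + 1) ν (j + 1) = ((j : ℝ) + 1) * lc m ν (j + 1) - lc m ν j := by
  have hΓj : Real.Gamma ((j : ℝ) + ν + 1) ≠ 0 := (gamma_pos ν hν j).ne'
  have hjpos : (0:ℝ) < (j : ℝ) + ν + 1 := by
    have := Nat.cast_nonneg (α := ℝ) j; linarith
  have hGj : Real.Gamma (((j + 1 : ℕ) : ℝ) + ν + 1)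
      = ((j : ℝ) + ν + 1) * Real.Gamma ((j : ℝ) + ν + 1) := by
    push_cast
    rw [show (j : ℝ) + 1 + ν + 1 = ((j : ℝ) + ν + 1) + 1 by ring, Real.Gamma_add_one hjpos.ne']
  have e1 : m + 1 - (j + 1) = (m - (j + 1)) + 1 := by omega
  have e2 : m - j = (m - (j + 1)) + 1 := by omega
  unfold lc
  rw [hG ν hν m, hGj, e1, e2, Nat.factorial_succ, Nat.factorial_succ j]
  have e3 : (m : ℝ) = ((m - (j + 1) : ℕ) : ℝ) + j + 1 := by
    rw [Nat.cast_sub (by omega)]; push_cast; ring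
  rw [e3]
  push_cast
  set M := ((m - (j + 1) : ℕ) : ℝ) with hM
  have hM0 : 0 ≤ M := Nat.cast_nonneg _
  have f1 : ((Nat.factorial (m - (j + 1)) : ℝ)) ≠ 0 := Nat.cast_ne_zero.mpr (Nat.factorial_ne_zero _)
  have f2 : ((Nat.factorial j : ℝ)) ≠ 0 := Nat.cast_ne_zero.mpr (Nat.factorial_ne_zero _)
  have f3 : M + 1 ≠ 0 := by linarith
  have f4 : (j : ℝ) + 1 ≠ 0 := by positivity
  field_simp
  ring

lemma coeffCb (ν : ℝ) (hν : -1 < ν) (m : ℕ) :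
    ((m : ℝ) + 1) * lc (m + 1) ν (m + 1) = - lc m ν m := by
  have hΓ2 : Real.Gamma (((m + 1 : ℕ) : ℝ) + ν + 1) ≠ 0 := (gamma_pos ν hν (m + 1)).ne'
  have hΓm : Real.Gamma ((m : ℝ) + ν + 1) ≠ 0 := (gamma_pos ν hν m).ne'
  unfold lc
  rw [Nat.sub_self, Nat.sub_self, Nat.factorial_zero, Nat.factorial_succ]
  have f1 : ((Nat.factorial m : ℝ)) ≠ 0 := Nat.cast_ne_zero.mpr (Nat.factorial_ne_zero _)
  have f2 : ((m : ℝ)) + 1 ≠ 0 := by positivity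
  rw [mul_div_assoc', ← neg_div]
  push_cast
  push_cast at hΓ2
  rw [div_eq_div_iff (by simp only [mul_one]; positivity)
    (by simp only [mul_one]; positivity)]
  ring

lemma laguerrePoly_eq (n : ℕ) (ν : ℝ) (x : ℝ) :
    laguerrePoly n ν x = ∑ k ∈ Finset.range (n + 1), lc n ν k * x ^ k := rfl

lemma hasDerivAt_laguerrePoly (n : ℕ) (ν x : ℝ) :
    HasDerivAt (fun s => laguerrePoly n ν s)
      (∑ k ∈ Finset.range (n + 1), lc n ν k * (k * x ^ (k - 1))) x := by
  have h : ∀ k ∈ Finset.range (n + 1),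
      HasDerivAt (fun s : ℝ => lc n ν k * s ^ k) (lc n ν k * (k * x ^ (k - 1))) x :=
    fun k _ => (hasDerivAt_pow k x).const_mul _
  have := HasDerivAt.fun_sum h
  simpa [laguerrePoly_eq] using this

lemma A_fun (ν : ℝ) (hν : -1 < ν) (m : ℕ) (x : ℝ) :
    x * (∑ k ∈ Finset.range (m + 2), lc (m + 1) ν k * (k * x ^ (k - 1)))
      = ((m : ℝ) + 1) * laguerrePoly (m + 1) ν x - ((m : ℝ) + 1 + ν) * laguerrePoly m ν x := by
  have step1 : x * (∑ k ∈ Finset.range (m + 2), lc (m + 1) ν k * (k * x ^ (k - 1)))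
      = ∑ k ∈ Finset.range (m + 2), (k : ℝ) * lc (m + 1) ν k * x ^ k := by
    rw [Finset.mul_sum]
    refine Finset.sum_congr rfl fun k _ => ?_
    match k with
    | 0 => simp
    | (k + 1) => push_cast; ring
  have key : ∑ k ∈ Finset.range (m + 2), (((m : ℝ) + 1) - k) * lc (m + 1) ν k * x ^ k
      = ∑ k ∈ Finset.range (m + 1), (((m : ℝ) + 1) + ν) * lc m ν k * x ^ k := by
    rw [Finset.sum_range_succ]
    have : (((m : ℝ) + 1) - ((m + 1 : ℕ) : ℝ)) = 0 := by push_cast; ring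
    rw [this]
    simp only [zero_mul, add_zero]
    refine Finset.sum_congr rfl fun k hk => ?_
    rw [coeffA ν hν m k (by simpa using Nat.lt_succ_iff.mp (Finset.mem_range.mp hk))]
  rw [step1, laguerrePoly_eq, laguerrePoly_eq, Finset.mul_sum, Finset.mul_sum]
  have expand : ∑ k ∈ Finset.range (m + 2), (k : ℝ) * lc (m + 1) ν k * x ^ k
      = ∑ k ∈ Finset.range (m + 2), (((m : ℝ) + 1) * (lc (m + 1) ν k * x ^ k))
        - ∑ k ∈ Finset.range (m + 2), (((m : ℝ) + 1) - k) * lc (m + 1) ν k * x ^ k := by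
    rw [← Finset.sum_sub_distrib]
    refine Finset.sum_congr rfl fun k _ => by ring
  rw [expand, key]
  congr 1
  refine Finset.sum_congr rfl fun k _ => by ring

lemma C_fun (ν : ℝ) (hν : -1 < ν) (m : ℕ) (x : ℝ) :
    ∑ k ∈ Finset.range (m + 2), lc (m + 1) ν k * (k * x ^ (k - 1))
      = (∑ k ∈ Finset.range (m + 1), lc m ν k * (k * x ^ (k - 1))) - laguerrePoly m ν x := by
  have hL := Finset.sum_range_succ' (fun k => lc (m + 1) ν k * (k * x ^ (k - 1))) (m + 1)
  have hR := Finset.sum_range_succ' (fun k => lc m ν k * (k * x ^ (k - 1))) m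
  rw [hL, hR, laguerrePoly_eq]
  simp only [Nat.cast_zero, zero_mul, mul_zero, add_zero, Nat.add_sub_cancel]
  rw [Finset.sum_range_succ (f := fun j => lc (m + 1) ν (j + 1) * (((j + 1 : ℕ) : ℝ) * x ^ j)),
    Finset.sum_range_succ (f := fun k => lc m ν k * x ^ k)]
  have hbd : lc (m + 1) ν (m + 1) * (((m + 1 : ℕ) : ℝ) * x ^ m) = -(lc m ν m * x ^ m) := by
    have h := coeffCb ν hν m
    push_cast
    linear_combination x ^ m * h
  have hint : ∑ j ∈ Finset.range m, lc (m + 1) ν (j + 1) * (((j + 1 : ℕ) : ℝ) * x ^ j)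
      = ∑ j ∈ Finset.range m, (lc m ν (j + 1) * (((j + 1 : ℕ) : ℝ) * x ^ j) - lc m ν j * x ^ j) := by
    refine Finset.sum_congr rfl fun j hj => ?_
    have h := coeffC ν hν m j (Finset.mem_range.mp hj)
    push_cast
    linear_combination x ^ j * h
  rw [hbd, hint, Finset.sum_sub_distrib]
  ring

lemma B_fun (ν : ℝ) (hν : -1 < ν) (m : ℕ) (x : ℝ) :
    x * (∑ k ∈ Finset.range (m + 1), lc m ν k * (k * x ^ (k - 1)))
      = ((m : ℝ) + 1) * laguerrePoly (m + 1) ν x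
        + (x - ((m : ℝ) + 1 + ν)) * laguerrePoly m ν x := by
  have hA := A_fun ν hν m x
  have hC := C_fun ν hν m x
  linear_combination hA - x * hC

lemma gammaN_pos (m : ℕ) : (0:ℝ) < Real.Gamma ((m : ℝ) + 1) := by
  apply Real.Gamma_pos_of_pos
  have := Nat.cast_nonneg (α := ℝ) m; linarith

-- (m+1+ν) c_{m+1} = A c_m
lemma sqrt1 (ν : ℝ) (hν : -1 < ν) (m : ℕ) :
    ((m : ℝ) + 1 + ν) * Real.sqrt (Real.Gamma (((m + 1 : ℕ) : ℝ) + 1) /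
        Real.Gamma (((m + 1 : ℕ) : ℝ) + ν + 1))
      = Real.sqrt (((m : ℝ) + 1) * ((m : ℝ) + 1 + ν)) *
        Real.sqrt (Real.Gamma ((m : ℝ) + 1) / Real.Gamma ((m : ℝ) + ν + 1)) := by
  have hmp : (0:ℝ) ≤ (m : ℝ) := Nat.cast_nonneg m
  have hνp : (0:ℝ) < (m : ℝ) + 1 + ν := by linarith
  have hGm : (0:ℝ) < Real.Gamma ((m : ℝ) + ν + 1) := gamma_pos ν hν m
  have hGn : (0:ℝ) < Real.Gamma ((m : ℝ) + 1) := gammaN_pos m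
  have h1 : (0:ℝ) < (m : ℝ) + 1 := by linarith
  have hGN : Real.Gamma (((m + 1 : ℕ) : ℝ) + 1) = ((m : ℝ) + 1) * Real.Gamma ((m : ℝ) + 1) := by
    push_cast
    rw [show (m : ℝ) + 1 + 1 = ((m : ℝ) + 1) + 1 by ring, Real.Gamma_add_one (by positivity)]
  calc ((m : ℝ) + 1 + ν) * Real.sqrt (Real.Gamma (((m + 1 : ℕ) : ℝ) + 1) /
        Real.Gamma (((m + 1 : ℕ) : ℝ) + ν + 1))
      = Real.sqrt (((m : ℝ) + 1 + ν) ^ 2) * Real.sqrt (Real.Gamma (((m + 1 : ℕ) : ℝ) + 1) /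
        Real.Gamma (((m + 1 : ℕ) : ℝ) + ν + 1)) := by rw [Real.sqrt_sq hνp.le]
    _ = Real.sqrt (((m : ℝ) + 1 + ν) ^ 2 * (Real.Gamma (((m + 1 : ℕ) : ℝ) + 1) /
        Real.Gamma (((m + 1 : ℕ) : ℝ) + ν + 1))) := (Real.sqrt_mul (by positivity) _).symm
    _ = Real.sqrt ((((m : ℝ) + 1) * ((m : ℝ) + 1 + ν)) *
        (Real.Gamma ((m : ℝ) + 1) / Real.Gamma ((m : ℝ) + ν + 1))) := by
        congr 1
        rw [hG ν hν m, hGN]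
        field_simp
    _ = Real.sqrt (((m : ℝ) + 1) * ((m : ℝ) + 1 + ν)) *
        Real.sqrt (Real.Gamma ((m : ℝ) + 1) / Real.Gamma ((m : ℝ) + ν + 1)) :=
        Real.sqrt_mul (mul_nonneg h1.le hνp.le) _

-- (m+1) c_m = A c_{m+1}
lemma sqrt2 (ν : ℝ) (hν : -1 < ν) (m : ℕ) :
    ((m : ℝ) + 1) * Real.sqrt (Real.Gamma ((m : ℝ) + 1) / Real.Gamma ((m : ℝ) + ν + 1))
      = Real.sqrt (((m : ℝ) + 1) * ((m : ℝ) + 1 + ν)) *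
        Real.sqrt (Real.Gamma (((m + 1 : ℕ) : ℝ) + 1) /
          Real.Gamma (((m + 1 : ℕ) : ℝ) + ν + 1)) := by
  have hmp : (0:ℝ) ≤ (m : ℝ) := Nat.cast_nonneg m
  have hνp : (0:ℝ) < (m : ℝ) + 1 + ν := by linarith
  have hGm : (0:ℝ) < Real.Gamma ((m : ℝ) + ν + 1) := gamma_pos ν hν m
  have hGn : (0:ℝ) < Real.Gamma ((m : ℝ) + 1) := gammaN_pos m
  have h1 : (0:ℝ) < (m : ℝ) + 1 := by linarith
  have hGM : (0:ℝ) < Real.Gamma (((m + 1 : ℕ) : ℝ) + ν + 1) := gamma_pos ν hν (m + 1)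
  have hGN : Real.Gamma (((m + 1 : ℕ) : ℝ) + 1) = ((m : ℝ) + 1) * Real.Gamma ((m : ℝ) + 1) := by
    push_cast
    rw [show (m : ℝ) + 1 + 1 = ((m : ℝ) + 1) + 1 by ring, Real.Gamma_add_one (by positivity)]
  calc ((m : ℝ) + 1) * Real.sqrt (Real.Gamma ((m : ℝ) + 1) / Real.Gamma ((m : ℝ) + ν + 1))
      = Real.sqrt (((m : ℝ) + 1) ^ 2) *
        Real.sqrt (Real.Gamma ((m : ℝ) + 1) / Real.Gamma ((m : ℝ) + ν + 1)) := by
        rw [Real.sqrt_sq h1.le]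
    _ = Real.sqrt (((m : ℝ) + 1) ^ 2 *
        (Real.Gamma ((m : ℝ) + 1) / Real.Gamma ((m : ℝ) + ν + 1))) :=
        (Real.sqrt_mul (by positivity) _).symm
    _ = Real.sqrt ((((m : ℝ) + 1) * ((m : ℝ) + 1 + ν)) *
        (Real.Gamma (((m + 1 : ℕ) : ℝ) + 1) / Real.Gamma (((m + 1 : ℕ) : ℝ) + ν + 1))) := by
        congr 1
        rw [hG ν hν m, hGN]
        field_simp
    _ = Real.sqrt (((m : ℝ) + 1) * ((m : ℝ) + 1 + ν)) *
        Real.sqrt (Real.Gamma (((m + 1 : ℕ) : ℝ) + 1) /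
          Real.Gamma (((m + 1 : ℕ) : ℝ) + ν + 1)) :=
        Real.sqrt_mul (mul_nonneg h1.le hνp.le) _

lemma expDeriv (t : ℝ) : HasDerivAt (fun s : ℝ => Real.exp (-s / 2))
    (Real.exp (-t / 2) * (-(1 / 2))) t := by
  have h0 : HasDerivAt (fun s : ℝ => -s / 2) (-(1 / 2)) t := by
    have := ((hasDerivAt_id t).neg.div_const 2)
    norm_num at this ⊢
    exact this
  exact h0.exp

lemma rpow_shift (ν t : ℝ) (ht : 0 < t) : t ^ (ν / 2 - 1) * t = t ^ (ν / 2) := by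
  have h := (Real.rpow_add_one ht.ne' (ν / 2 - 1)).symm
  rw [show ν / 2 - 1 + 1 = ν / 2 by ring] at h
  exact h

lemma hasDerivAt_laguerreFun_u (ν : ℝ) (hν : -1 < ν) (m : ℕ) (t : ℝ) (ht : 0 < t) :
    HasDerivAt (fun s => laguerreFun m ν s)
      (((t / 2 - ν / 2 - ((m : ℝ) + 1)) * laguerreFun m ν t
        + Real.sqrt (((m : ℝ) + 1) * ((m : ℝ) + 1 + ν)) * laguerreFun (m + 1) ν t) / t) t := by
  have hp := hasDerivAt_laguerrePoly m ν t
  have hr : HasDerivAt (fun s : ℝ => s ^ (ν / 2)) ((ν / 2) * t ^ (ν / 2 - 1)) t :=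
    Real.hasDerivAt_rpow_const (Or.inl ht.ne')
  have he := expDeriv t
  set c := Real.sqrt (Real.Gamma ((m : ℝ) + 1) / Real.Gamma ((m : ℝ) + ν + 1)) with hc
  have H := ((hp.const_mul c).fun_mul hr).fun_mul he
  have hfun : (fun s => laguerreFun m ν s)
      = fun s => c * laguerrePoly m ν s * s ^ (ν / 2) * Real.exp (-s / 2) := by
    funext s; simp [laguerreFun, hc]
  rw [hfun]
  refine H.congr_deriv (Eq.symm ?_)
  rw [eq_comm, eq_div_iff ht.ne']
  have hB := B_fun ν hν m t
  have hT := rpow_shift ν t ht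
  have hs2 := sqrt2 ν hν m
  simp only [laguerreFun]
  rw [← hc]
  set P' := ∑ k ∈ Finset.range (m + 1), lc m ν k * ((k : ℝ) * t ^ (k - 1)) with hP'
  linear_combination (c * t ^ (ν / 2) * Real.exp (-t / 2)) * hB
    + (c * laguerrePoly m ν t * (ν / 2) * Real.exp (-t / 2)) * hT
    + (laguerrePoly (m + 1) ν t * t ^ (ν / 2) * Real.exp (-t / 2)) * hs2

lemma hasDerivAt_laguerreFun_v (ν : ℝ) (hν : -1 < ν) (m : ℕ) (t : ℝ) (ht : 0 < t) :
    HasDerivAt (fun s => laguerreFun (m + 1) ν s)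
      ((-Real.sqrt (((m : ℝ) + 1) * ((m : ℝ) + 1 + ν)) * laguerreFun m ν t
        - (t / 2 - ν / 2 - ((m : ℝ) + 1)) * laguerreFun (m + 1) ν t) / t) t := by
  have hp := hasDerivAt_laguerrePoly (m + 1) ν t
  have hr : HasDerivAt (fun s : ℝ => s ^ (ν / 2)) ((ν / 2) * t ^ (ν / 2 - 1)) t :=
    Real.hasDerivAt_rpow_const (Or.inl ht.ne')
  have he := expDeriv t
  set c' := Real.sqrt (Real.Gamma (((m + 1 : ℕ) : ℝ) + 1) /
    Real.Gamma (((m + 1 : ℕ) : ℝ) + ν + 1)) with hc'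
  have H := ((hp.const_mul c').fun_mul hr).fun_mul he
  have hfun : (fun s => laguerreFun (m + 1) ν s)
      = fun s => c' * laguerrePoly (m + 1) ν s * s ^ (ν / 2) * Real.exp (-s / 2) := by
    funext s; simp [laguerreFun, hc']
  rw [hfun]
  refine H.congr_deriv (Eq.symm ?_)
  rw [eq_comm, eq_div_iff ht.ne']
  have hA := A_fun ν hν m t
  have hT := rpow_shift ν t ht
  have hs1 := sqrt1 ν hν m
  simp only [laguerreFun]
  rw [← hc']
  linear_combination (c' * t ^ (ν / 2) * Real.exp (-t / 2)) * hA
    + (c' * laguerrePoly (m + 1) ν t * (ν / 2) * Real.exp (-t / 2)) * hT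
    - (laguerrePoly m ν t * t ^ (ν / 2) * Real.exp (-t / 2)) * hs1


/-- with `Φ(x,y) = (L_{n-1}^ν(x)L_n^ν(y) - L_{n-1}^ν(y)L_n^ν(x))/(x-y)`,
one has `(x ∂ₓ + y ∂_y + 1)Φ(x,y) = (1/2)[L_{n-1}^ν(x)L_n^ν(y) + L_{n-1}^ν(y)L_n^ν(x)]`. -/
theorem stmt_6 (ν : ℝ) (hν : -1 < ν) (n : ℕ) (hn : 1 ≤ n) (x y : ℝ)
    (hx : 0 < x) (hy : 0 < y) (hxy : x ≠ y) :
    x * deriv (fun s => (laguerreFun (n - 1) ν s * laguerreFun n ν y -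
          laguerreFun (n - 1) ν y * laguerreFun n ν s) / (s - y)) x
      + y * deriv (fun s => (laguerreFun (n - 1) ν x * laguerreFun n ν s -
          laguerreFun (n - 1) ν s * laguerreFun n ν x) / (x - s)) y
      + (laguerreFun (n - 1) ν x * laguerreFun n ν y -
          laguerreFun (n - 1) ν y * laguerreFun n ν x) / (x - y)
      = (1 / 2) * (laguerreFun (n - 1) ν x * laguerreFun n ν y +
          laguerreFun (n - 1) ν y * laguerreFun n ν x) := by
  obtain ⟨m, rfl⟩ : ∃ m, n = m + 1 := ⟨n - 1, (Nat.succ_pred_eq_of_pos hn).symm⟩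
  simp only [Nat.add_sub_cancel]
  have hux := hasDerivAt_laguerreFun_u ν hν m x hx
  have hvx := hasDerivAt_laguerreFun_v ν hν m x hx
  have huy := hasDerivAt_laguerreFun_u ν hν m y hy
  have hvy := hasDerivAt_laguerreFun_v ν hν m y hy
  have hxy' : x - y ≠ 0 := sub_ne_zero.mpr hxy
  have h1 : HasDerivAt (fun s => laguerreFun m ν s * laguerreFun (m + 1) ν y -
      laguerreFun m ν y * laguerreFun (m + 1) ν s)
      (((x / 2 - ν / 2 - ((m : ℝ) + 1)) * laguerreFun m ν x
        + Real.sqrt (((m : ℝ) + 1) * ((m : ℝ) + 1 + ν)) * laguerreFun (m + 1) ν x) / x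
          * laguerreFun (m + 1) ν y
        - laguerreFun m ν y *
          ((-Real.sqrt (((m : ℝ) + 1) * ((m : ℝ) + 1 + ν)) * laguerreFun m ν x
            - (x / 2 - ν / 2 - ((m : ℝ) + 1)) * laguerreFun (m + 1) ν x) / x)) x :=
    (hux.mul_const _).sub (hvx.const_mul _)
  have h2 : HasDerivAt (fun s : ℝ => s - y) 1 x := (hasDerivAt_id x).sub_const y
  have hF1 := h1.div h2 hxy'
  have h3 : HasDerivAt (fun s => laguerreFun m ν x * laguerreFun (m + 1) ν s -
      laguerreFun m ν s * laguerreFun (m + 1) ν x)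
      (laguerreFun m ν x *
          ((-Real.sqrt (((m : ℝ) + 1) * ((m : ℝ) + 1 + ν)) * laguerreFun m ν y
            - (y / 2 - ν / 2 - ((m : ℝ) + 1)) * laguerreFun (m + 1) ν y) / y)
        - ((y / 2 - ν / 2 - ((m : ℝ) + 1)) * laguerreFun m ν y
          + Real.sqrt (((m : ℝ) + 1) * ((m : ℝ) + 1 + ν)) * laguerreFun (m + 1) ν y) / y
          * laguerreFun (m + 1) ν x) y :=
    (hvy.const_mul _).sub (huy.mul_const _)
  have h4 : HasDerivAt (fun s : ℝ => x - s) (-1) y := by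
    simpa using (hasDerivAt_id y).const_sub x
  have hF2 := h3.div h4 (by simpa using hxy')
  simp only [Pi.div_def] at hF1 hF2
  rw [hF1.deriv, hF2.deriv]
  field_simp
  ring
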